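/- Let δ > 0, let t : Fin n → ℝ be strictly increasing (initial configuration), and let x : Fin n → ℝ be strictly increasing with x (k+1) − x k ≥ δ for all consecutive indices (hence δ-independent). Suppose that for every maximal chain of x with index interval [i, j]: (a) for every l with i ≤ l ≤ j, the prefix P = {i, …, l} satisfies |{k ∈ P : x k ≤ t k}| > |{k ∈ P : x k > t k}|; and (b) for every l with i ≤ l ≤ j, the suffix S = {l, …, j} satisfies |{k ∈ S : x k < t k}| ≤ |{k ∈ S : x k ≥ t k}|. Then x is an optimal solution of the movement-to-independence problem: for every δ-independent configuration y : Fin n → ℝ (not necessarily order-preserving), Σ_k |t k − x k| ≤ Σ_k |t k − y k|. -/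

import Mathlib

/-- The indices `i ≤ j` delimit a chain of the configuration `x`:
consecutive points with indices in `[i, j]` are at distance exactly `δ`. -/
def IsChainInterval {n : ℕ} (δ : ℝ) (x : Fin n → ℝ) (i j : Fin n) : Prop :=
  i ≤ j ∧ ∀ (k : ℕ) (_hik : (i : ℕ) ≤ k) (hkj : k < (j : ℕ)),
    x ⟨k + 1, Nat.lt_of_le_of_lt hkj j.isLt⟩ - x ⟨k, Nat.lt_trans hkj j.isLt⟩ = δ

/-- The chain delimited by `i ≤ j` is maximal: it cannot be extended to the
left nor to the right. -/
def IsMaximalChain {n : ℕ} (δ : ℝ) (x : Fin n → ℝ) (i j : Fin n) : Prop :=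
  IsChainInterval δ x i j ∧
    ((i : ℕ) = 0 ∨
      ∃ h : (i : ℕ) - 1 < n, x i - x ⟨(i : ℕ) - 1, h⟩ > δ) ∧
    ((j : ℕ) + 1 = n ∨
      ∃ h : (j : ℕ) + 1 < n, x ⟨(j : ℕ) + 1, h⟩ - x j > δ)

open Finset

private lemma four_point {a b u v : ℝ} (hab : a ≤ b) (hvu : v ≤ u) :
    |a - v| + |b - u| ≤ |a - u| + |b - v| := by
  rcases abs_cases (a - v) with ⟨h1, h1'⟩ | ⟨h1, h1'⟩ <;>
  rcases abs_cases (b - u) with ⟨h2, h2'⟩ | ⟨h2, h2'⟩ <;>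
  rcases abs_cases (a - u) with ⟨h3, h3'⟩ | ⟨h3, h3'⟩ <;>
  rcases abs_cases (b - v) with ⟨h4, h4'⟩ | ⟨h4, h4'⟩ <;>
  linarith

private lemma strictMono_of_adj {n : ℕ} (f : Fin n → ℝ)
    (h : ∀ (k : ℕ) (hk : k + 1 < n), f ⟨k, Nat.lt_of_succ_lt hk⟩ < f ⟨k + 1, hk⟩) :
    StrictMono f := by
  have key : ∀ (s a : ℕ) (_hs : 0 < s) (hlt : a + s < n),
      f ⟨a, by omega⟩ < f ⟨a + s, hlt⟩ := by
    intro s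
    induction s with
    | zero => intro a hs _; exact absurd hs (lt_irrefl 0)
    | succ s ihs =>
      intro a _ hlt
      rcases Nat.eq_zero_or_pos s with h0 | hpos
      · subst h0; exact h a hlt
      · have h1 := ihs a hpos (by omega)
        have h2 := h (a + s) (by omega)
        exact lt_trans h1 h2
  intro a b hab
  have hval : (a : ℕ) < (b : ℕ) := hab
  have hb : b = ⟨(a : ℕ) + ((b : ℕ) - (a : ℕ)), by omega⟩ := by
    apply Fin.ext; simp; omega
  rw [hb]
  exact key ((b : ℕ) - (a : ℕ)) (a : ℕ) (by omega) (by omega)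

private lemma exists_sorted (n : ℕ) (δ : ℝ) (hδ : 0 < δ) (t y : Fin n → ℝ) (ht : StrictMono t)
    (hy : ∀ a b : Fin n, a ≠ b → |y a - y b| ≥ δ) :
    ∃ z : Fin n → ℝ, StrictMono z ∧ (∀ a b : Fin n, a ≠ b → |z a - z b| ≥ δ) ∧
      (∑ k, |t k - z k|) ≤ ∑ k, |t k - y k| := by
  classical
  have hyinj : Function.Injective y := by
    intro a b hab
    by_contra hne
    have h1 := hy a b hne
    rw [hab, sub_self, abs_zero] at h1; linarith
  set S : Finset (Equiv.Perm (Fin n)) :=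
    Finset.univ.filter (fun σ => (∑ k, |t k - y (σ k)|) ≤ ∑ k, |t k - y k|) with hS
  have h1S : (1 : Equiv.Perm (Fin n)) ∈ S := by simp [hS]
  obtain ⟨σ, hσS, hσmax⟩ := Finset.exists_max_image S
    (fun σ => ∑ k : Fin n, ((k : ℕ) : ℝ) * y (σ k)) ⟨1, h1S⟩
  have hσcost : (∑ k, |t k - y (σ k)|) ≤ ∑ k, |t k - y k| := by
    have := (Finset.mem_filter.mp hσS).2
    simpa using this
  have hadj : ∀ (k : ℕ) (hk : k + 1 < n),
      y (σ ⟨k, Nat.lt_of_succ_lt hk⟩) < y (σ ⟨k + 1, hk⟩) := by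
    intro k hk
    set a : Fin n := ⟨k, Nat.lt_of_succ_lt hk⟩ with ha
    set b : Fin n := ⟨k + 1, hk⟩ with hbdef
    have hab : a ≠ b := by
      intro hcontra
      have := congrArg Fin.val hcontra
      simp [ha, hbdef] at this
    by_contra hle
    push_neg at hle
    have hne2 : σ a ≠ σ b := fun h' => hab (σ.injective h')
    have hlt2 : y (σ b) < y (σ a) :=
      lt_of_le_of_ne hle (fun h' => hne2 (hyinj h').symm)
    set τ := σ * Equiv.swap a b with hτ
    have hτapp : ∀ c, τ c = σ (Equiv.swap a b c) := fun c => rfl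
    have hτa : τ a = σ b := by rw [hτapp, Equiv.swap_apply_left]
    have hτb : τ b = σ a := by rw [hτapp, Equiv.swap_apply_right]
    have hfix : ∀ c : Fin n, c ≠ a → c ≠ b → τ c = σ c := fun c h1 h2 => by
      rw [hτapp, Equiv.swap_apply_of_ne_of_ne h1 h2]
    have htab : t a ≤ t b := le_of_lt (ht (show a < b by
      rw [Fin.lt_def]; simp [ha, hbdef]))
    have hpair : ∀ F G : Fin n → ℝ, (∀ c, c ≠ a → c ≠ b → F c = G c) →
        (∑ k, F k) - (∑ k, G k) = (F a - G a) + (F b - G b) := by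
      intro F G hFG
      rw [← Finset.sum_sub_distrib]
      rw [← Finset.sum_subset (Finset.subset_univ ({a, b} : Finset (Fin n)))
        (fun c _ hc => by
          simp only [Finset.mem_insert, Finset.mem_singleton, not_or] at hc
          rw [hFG c hc.1 hc.2, sub_self])]
      rw [Finset.sum_pair hab]
    have hcost2 : (∑ k, |t k - y (τ k)|) ≤ ∑ k, |t k - y (σ k)| := by
      have hd := hpair (fun k => |t k - y (τ k)|) (fun k => |t k - y (σ k)|)
        (fun c h1 h2 => by show |t c - y (τ c)| = |t c - y (σ c)|; rw [hfix c h1 h2])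
      rw [hτa, hτb] at hd
      have hfp := four_point htab (le_of_lt hlt2)
      linarith
    have hτS : τ ∈ S := by
      simp only [hS, Finset.mem_filter]
      exact ⟨Finset.mem_univ _, le_trans hcost2 hσcost⟩
    have hΦ := hσmax τ hτS
    have hd2 := hpair (fun k => ((k : ℕ) : ℝ) * y (τ k)) (fun k => ((k : ℕ) : ℝ) * y (σ k))
      (fun c h1 h2 => by show ((c : ℕ) : ℝ) * y (τ c) = ((c : ℕ) : ℝ) * y (σ c); rw [hfix c h1 h2])
    rw [hτa, hτb] at hd2
    have hvals : ((a : ℕ) : ℝ) < ((b : ℕ) : ℝ) := by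
      have : (a : ℕ) < (b : ℕ) := by simp [ha, hbdef]
      exact_mod_cast this
    nlinarith [mul_pos (sub_pos.mpr hvals) (sub_pos.mpr hlt2)]
  refine ⟨y ∘ σ, strictMono_of_adj _ hadj, ?_, hσcost⟩
  intro a b hab
  exact hy (σ a) (σ b) (fun h => hab (σ.injective h))

private lemma abel_left (i M : ℕ) (ε g : ℕ → ℝ)
    (hg : ∀ k, i ≤ k → k + 1 ≤ M → g (k + 1) ≤ g k)
    (hE : ∀ m, i ≤ m → m ≤ M → (∑ k ∈ Icc i m, ε k) ≤ 0) :
    ∀ m, i ≤ m → m ≤ M → (∑ k ∈ Icc i m, ε k * g k) ≤ (∑ k ∈ Icc i m, ε k) * g m := by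
  intro m him
  induction m, him using Nat.le_induction with
  | base => intro _; simp [Icc_self]
  | succ m him ih =>
    intro hM
    have hsum : ∀ f : ℕ → ℝ, (∑ k ∈ Icc i (m + 1), f k) = f (m + 1) + ∑ k ∈ Icc i m, f k := by
      intro f
      rw [← (show insert (m + 1) (Icc i m) = Icc i (m + 1) from (by ext a; simp only [Finset.mem_Icc, Finset.mem_Ico, Finset.mem_insert]; omega)),
        Finset.sum_insert (by intro hmem; rw [Finset.mem_Icc] at hmem; omega)]
    rw [hsum, hsum]
    have ihm := ih (by omega)
    have hE' := hE m him (by omega)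
    have hg' := hg m him (by omega)
    have hmul : (∑ k ∈ Icc i m, ε k) * g m ≤ (∑ k ∈ Icc i m, ε k) * g (m + 1) :=
      mul_le_mul_of_nonpos_left hg' hE'
    have hexp : (ε (m + 1) + ∑ k ∈ Icc i m, ε k) * g (m + 1)
        = ε (m + 1) * g (m + 1) + (∑ k ∈ Icc i m, ε k) * g (m + 1) := by ring
    linarith

private lemma abel_right (j : ℕ) (ε d : ℕ → ℝ) (p : ℕ)
    (hd : ∀ k, p ≤ k → k + 1 ≤ j → d k ≤ d (k + 1))
    (hF : ∀ m, p ≤ m → m ≤ j → (∑ k ∈ Icc m j, ε k) ≤ 0) :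
    ∀ m, p ≤ m → m ≤ j → (∑ k ∈ Icc m j, ε k * d k) ≤ (∑ k ∈ Icc m j, ε k) * d m := by
  intro m hpm hmj
  obtain ⟨s, hs⟩ : ∃ s, j - m = s := ⟨_, rfl⟩
  induction s generalizing m with
  | zero =>
    have : m = j := by omega
    subst this
    simp [Icc_self]
  | succ s ihs =>
    have hmlt : m < j := by omega
    have hpeel : ∀ f : ℕ → ℝ, (∑ k ∈ Icc m j, f k) = f m + ∑ k ∈ Icc (m + 1) j, f k := by
      intro f
      rw [← (show insert m (Icc (m + 1) j) = Icc m j from (by ext a; simp only [Finset.mem_Icc, Finset.mem_Ico, Finset.mem_insert]; omega)),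
        Finset.sum_insert (by intro hmem; rw [Finset.mem_Icc] at hmem; omega)]
    have ih := ihs (m + 1) (by omega) (by omega) (by omega)
    have hF1 := hF (m + 1) (by omega) (by omega)
    have hd1 := hd m hpm (by omega)
    rw [hpeel, hpeel]
    have hmul : (∑ k ∈ Icc (m + 1) j, ε k) * d (m + 1) ≤ (∑ k ∈ Icc (m + 1) j, ε k) * d m :=
      mul_le_mul_of_nonpos_left hd1 hF1
    have hexp : (ε m + ∑ k ∈ Icc (m + 1) j, ε k) * d m
        = ε m * d m + (∑ k ∈ Icc (m + 1) j, ε k) * d m := by ring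
    linarith

private lemma chain_bound (δ : ℝ) (i j : ℕ) (hij : i ≤ j) (T X Z : ℕ → ℝ)
    (hmono : ∀ k, i ≤ k → k < j → Z k - X k ≤ Z (k + 1) - X (k + 1))
    (hE : ∀ m, i ≤ m → m ≤ j → (∑ k ∈ Icc i m, (if T k < X k then (1 : ℝ) else -1)) ≤ 0)
    (hF : ∀ m, i ≤ m → m ≤ j → (∑ k ∈ Icc m j, (if X k < T k then (1 : ℝ) else -1)) ≤ 0) :
    (∑ k ∈ Icc i j, (|T k - X k| - |T k - Z k|)) ≤ 0 := by
  classical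
  set d : ℕ → ℝ := fun k => Z k - X k with hd
  have dmono : ∀ k l, i ≤ k → k ≤ l → l ≤ j → d k ≤ d l := by
    intro k l hik hkl hlj
    induction l, hkl using Nat.le_induction with
    | base => exact le_refl _
    | succ l hkl ihl =>
      have h1 := hmono l (by omega) (by omega)
      have h2 := ihl (by omega)
      simp only [hd] at *
      linarith
  have pleft : ∀ k, |T k - X k| - |T k - Z k|
      ≤ (if T k < X k then (1 : ℝ) else -1) * (X k - Z k) := by
    intro k
    by_cases h : T k < X k
    · simp only [if_pos h]
      have h1 : |T k - X k| = X k - T k := by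
        rw [abs_sub_comm]; exact abs_of_pos (by linarith)
      have h2 : Z k - T k ≤ |T k - Z k| := by
        rw [abs_sub_comm]; exact le_abs_self _
      linarith
    · simp only [if_neg h]
      push_neg at h
      have h1 : |T k - X k| = T k - X k := abs_of_nonneg (by linarith)
      have h2 : T k - Z k ≤ |T k - Z k| := le_abs_self _
      linarith
  have pright : ∀ k, |T k - X k| - |T k - Z k|
      ≤ (if X k < T k then (1 : ℝ) else -1) * (Z k - X k) := by
    intro k
    by_cases h : X k < T k
    · simp only [if_pos h]
      have h1 : |T k - X k| = T k - X k := abs_of_pos (by linarith)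
      have h2 : T k - Z k ≤ |T k - Z k| := le_abs_self _
      linarith
    · simp only [if_neg h]
      push_neg at h
      have h1 : |T k - X k| = X k - T k := by
        rw [abs_sub_comm]; exact abs_of_nonneg (by linarith)
      have h2 : Z k - T k ≤ |T k - Z k| := by
        rw [abs_sub_comm]; exact le_abs_self _
      linarith
  have leftpart : ∀ q, i ≤ q → q ≤ j → (∀ k, i ≤ k → k ≤ q → d k < 0) →
      (∑ k ∈ Icc i q, (|T k - X k| - |T k - Z k|)) ≤ 0 := by
    intro q hiq hqj hneg
    have h1 : (∑ k ∈ Icc i q, (|T k - X k| - |T k - Z k|))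
        ≤ ∑ k ∈ Icc i q, (if T k < X k then (1 : ℝ) else -1) * (X k - Z k) :=
      Finset.sum_le_sum (fun k _ => pleft k)
    have h2 := abel_left i q (fun k => if T k < X k then (1 : ℝ) else -1)
      (fun k => X k - Z k)
      (fun k hik hk1 => by
        have := hmono k hik (by omega)
        linarith)
      (fun m him hmq => hE m him (by omega))
      q hiq le_rfl
    have h3 := hE q hiq hqj
    have h4 : (0 : ℝ) ≤ X q - Z q := by
      have := hneg q hiq le_rfl
      simp only [hd] at this
      linarith
    have h5 : (∑ k ∈ Icc i q, (if T k < X k then (1 : ℝ) else -1)) * (X q - Z q) ≤ 0 :=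
      mul_nonpos_iff.mpr (Or.inr ⟨h3, h4⟩)
    calc (∑ k ∈ Icc i q, (|T k - X k| - |T k - Z k|))
        ≤ ∑ k ∈ Icc i q, (if T k < X k then (1 : ℝ) else -1) * (X k - Z k) := h1
      _ ≤ (∑ k ∈ Icc i q, (if T k < X k then (1 : ℝ) else -1)) * (X q - Z q) := h2
      _ ≤ 0 := h5
  have rightpart : ∀ p, i ≤ p → p ≤ j → 0 ≤ d p →
      (∑ k ∈ Icc p j, (|T k - X k| - |T k - Z k|)) ≤ 0 := by
    intro p hip hpj hdp
    have h1 : (∑ k ∈ Icc p j, (|T k - X k| - |T k - Z k|))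
        ≤ ∑ k ∈ Icc p j, (if X k < T k then (1 : ℝ) else -1) * (Z k - X k) :=
      Finset.sum_le_sum (fun k _ => pright k)
    have h2 := abel_right j (fun k => if X k < T k then (1 : ℝ) else -1)
      (fun k => Z k - X k) p
      (fun k hpk hk1 => by
        have := hmono k (by omega) (by omega)
        linarith)
      (fun m hpm hmj => hF m (by omega) hmj)
      p le_rfl hpj
    have h3 := hF p hip hpj
    have h5 : (∑ k ∈ Icc p j, (if X k < T k then (1 : ℝ) else -1)) * (Z p - X p) ≤ 0 :=
      mul_nonpos_iff.mpr (Or.inr ⟨h3, hdp⟩)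
    calc (∑ k ∈ Icc p j, (|T k - X k| - |T k - Z k|))
        ≤ ∑ k ∈ Icc p j, (if X k < T k then (1 : ℝ) else -1) * (Z k - X k) := h1
      _ ≤ (∑ k ∈ Icc p j, (if X k < T k then (1 : ℝ) else -1)) * (Z p - X p) := h2
      _ ≤ 0 := h5
  by_cases hex : ∃ k, (i ≤ k ∧ k ≤ j) ∧ 0 ≤ d k
  · set p := Nat.find hex with hp
    obtain ⟨⟨hip, hpj⟩, hdp⟩ := Nat.find_spec hex
    rcases Nat.eq_or_lt_of_le hip with he | hlt
    · have hthis := rightpart p hip hpj hdp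
      rw [he]
      exact hthis
    · have hneg : ∀ k, i ≤ k → k ≤ p - 1 → d k < 0 := by
        intro k hik hk
        have hkp : k < p := by omega
        have hmin := Nat.find_min hex hkp
        by_contra hge
        push_neg at hge
        exact hmin ⟨⟨hik, by omega⟩, hge⟩
      have h1 := leftpart (p - 1) (by omega) (by omega) hneg
      have h2 := rightpart p hip hpj hdp
      have e2 : Icc i (p - 1) = Ico i p := by
        ext a; simp only [Finset.mem_Icc, Finset.mem_Ico]; omega
      have e3 : Icc p j = Ico p (j + 1) := (by ext a; simp only [Finset.mem_Icc, Finset.mem_Ico, Finset.mem_insert]; omega)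
      have e1 : Icc i j = Ico i (j + 1) := (by ext a; simp only [Finset.mem_Icc, Finset.mem_Ico, Finset.mem_insert]; omega)
      have hcons := Finset.sum_Ico_consecutive (fun k => |T k - X k| - |T k - Z k|)
        (show i ≤ p by omega) (show p ≤ j + 1 by omega)
      rw [e2] at h1
      rw [e3] at h2
      rw [e1, ← hcons]
      linarith
  · push_neg at hex
    exact leftpart j hij le_rfl (fun k hik hkj => hex k ⟨hik, hkj⟩)

private lemma global_bound (n : ℕ) (δ : ℝ) (T X Z : ℕ → ℝ)
    (hxgap : ∀ k, k + 1 < n → δ ≤ X (k + 1) - X k)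
    (hzgap : ∀ k, k + 1 < n → δ ≤ Z (k + 1) - Z k)
    (hE : ∀ i j, i ≤ j → j < n →
        (i = 0 ∨ X i - X (i - 1) > δ) → (j + 1 = n ∨ X (j + 1) - X j > δ) →
        (∀ k, i ≤ k → k < j → X (k + 1) - X k = δ) →
        ∀ m, i ≤ m → m ≤ j → (∑ k ∈ Icc i m, (if T k < X k then (1 : ℝ) else -1)) ≤ 0)
    (hF : ∀ i j, i ≤ j → j < n →
        (i = 0 ∨ X i - X (i - 1) > δ) → (j + 1 = n ∨ X (j + 1) - X j > δ) →
        (∀ k, i ≤ k → k < j → X (k + 1) - X k = δ) →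
        ∀ m, i ≤ m → m ≤ j → (∑ k ∈ Icc m j, (if X k < T k then (1 : ℝ) else -1)) ≤ 0) :
    (∑ k ∈ Ico 0 n, (|T k - X k| - |T k - Z k|)) ≤ 0 := by
  classical
  suffices key : ∀ s m, n - m = s → m ≤ n → (m = n ∨ m = 0 ∨ X m - X (m - 1) > δ) →
      (∑ k ∈ Ico m n, (|T k - X k| - |T k - Z k|)) ≤ 0 by
    exact key n 0 (by omega) (Nat.zero_le n) (Or.inr (Or.inl rfl))
  intro s
  induction s using Nat.strong_induction_on with
  | _ s ih =>
    intro m hs hmn hbd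
    rcases Nat.eq_or_lt_of_le hmn with heq | hlt
    · rw [heq]
      simp
    · have hQex : ∃ k, m ≤ k ∧ k < n ∧ (k + 1 = n ∨ X (k + 1) - X k > δ) :=
        ⟨n - 1, by omega, by omega, Or.inl (by omega)⟩
      obtain ⟨hmj, hjn, hjmax⟩ := Nat.find_spec hQex
      set j := Nat.find hQex with hj
      have hinterior : ∀ k, m ≤ k → k < j → X (k + 1) - X k = δ := by
        intro k hmk hkj
        have hk1n : k + 1 < n := by omega
        have hnot := Nat.find_min hQex hkj
        have hx := hxgap k hk1n
        by_contra hne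
        exact hnot ⟨hmk, by omega, Or.inr (by
          rcases lt_or_eq_of_le hx with h' | h'
          · exact h'
          · exact absurd h'.symm hne)⟩
      have hleft : m = 0 ∨ X m - X (m - 1) > δ := by
        rcases hbd with h | h | h
        · omega
        · exact Or.inl h
        · exact Or.inr h
      have hchain : (∑ k ∈ Icc m j, (|T k - X k| - |T k - Z k|)) ≤ 0 := by
        apply chain_bound δ m j hmj T X Z
        · intro k hmk hkj
          have h1 := hinterior k hmk hkj
          have h2 := hzgap k (by omega)
          linarith
        · exact hE m j hmj hjn hleft hjmax hinterior
        · exact hF m j hmj hjn hleft hjmax hinterior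
      have hrest : (∑ k ∈ Ico (j + 1) n, (|T k - X k| - |T k - Z k|)) ≤ 0 := by
        apply ih (n - (j + 1)) (by omega) (j + 1) rfl (by omega)
        rcases hjmax with h | h
        · exact Or.inl h
        · exact Or.inr (Or.inr (by simpa using h))
      have hcons := Finset.sum_Ico_consecutive (fun k => |T k - X k| - |T k - Z k|)
        (show m ≤ j + 1 by omega) (show j + 1 ≤ n by omega)
      have e3 : Icc m j = Ico m (j + 1) := (by ext a; simp only [Finset.mem_Icc, Finset.mem_Ico, Finset.mem_insert]; omega)
      rw [e3] at hchain
      rw [← hcons]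
      linarith

private lemma sum_pm (s : Finset ℕ) (P : ℕ → Prop) [DecidablePred P] :
    (∑ k ∈ s, (if P k then (1 : ℝ) else -1))
      = ((s.filter P).card : ℝ) - ((s.filter (fun k => ¬ P k)).card : ℝ) := by
  rw [Finset.sum_ite, Finset.sum_const, Finset.sum_const]
  simp [nsmul_eq_mul]
  ring

private lemma card_fin_nat (n : ℕ) (a b : Fin n) (p : Fin n → Prop) [DecidablePred p]
    (Q : ℕ → Prop) [DecidablePred Q] (h : ∀ (k : ℕ) (hk : k < n), (p ⟨k, hk⟩ ↔ Q k)) :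
    ((Finset.Icc a b).filter p).card = ((Finset.Icc (a : ℕ) (b : ℕ)).filter Q).card := by
  apply Finset.card_bij (fun (k : Fin n) _ => (k : ℕ))
  · intro k hk
    simp only [Finset.mem_filter, Finset.mem_Icc] at hk ⊢
    refine ⟨⟨hk.1.1, hk.1.2⟩, ?_⟩
    have := hk.2
    rw [show k = ⟨(k : ℕ), k.isLt⟩ from (Fin.eta k k.isLt).symm] at this
    exact (h (k : ℕ) k.isLt).mp this
  · intro k1 _ k2 _ hk
    exact Fin.val_injective hk
  · intro k hk
    simp only [Finset.mem_filter, Finset.mem_Icc] at hk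
    have hkn : k < n := lt_of_le_of_lt hk.1.2 b.isLt
    refine ⟨⟨k, hkn⟩, ?_, rfl⟩
    simp only [Finset.mem_filter, Finset.mem_Icc]
    exact ⟨⟨hk.1.1, hk.1.2⟩, (h k hkn).mpr hk.2⟩

open Finset in
/-- If every prefix of every maximal chain of `x` satisfies Property 1
(|L| + |O| > |R|) and every suffix satisfies Property 2 (|L| ≤ |O| + |R|),
then `x` is an optimal solution of the movement-to-independence problem. -/
theorem properties_imply_optimal (n : ℕ) (δ : ℝ) (hδ : 0 < δ)
    (t : Fin n → ℝ) (ht : StrictMono t)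
    (x : Fin n → ℝ) (hx : StrictMono x)
    (hgap : ∀ (k : ℕ) (h : k + 1 < n),
      x ⟨k + 1, h⟩ - x ⟨k, Nat.lt_of_succ_lt h⟩ ≥ δ)
    (hprefix : ∀ i j : Fin n, IsMaximalChain δ x i j →
      ∀ l : Fin n, i ≤ l → l ≤ j →
        ((Finset.Icc i l).filter (fun k => t k < x k)).card
          < ((Finset.Icc i l).filter (fun k => x k ≤ t k)).card)
    (hsuffix : ∀ i j : Fin n, IsMaximalChain δ x i j →
      ∀ l : Fin n, i ≤ l → l ≤ j →
        ((Finset.Icc l j).filter (fun k => x k < t k)).card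
          ≤ ((Finset.Icc l j).filter (fun k => t k ≤ x k)).card) :
    ∀ y : Fin n → ℝ, (∀ a b : Fin n, a ≠ b → |y a - y b| ≥ δ) →
      ∑ k, |t k - x k| ≤ ∑ k, |t k - y k| := by
  intro y hy
  obtain ⟨z, hzmono, hzpair, hzcost⟩ := exists_sorted n δ hδ t y ht hy
  classical
  set T : ℕ → ℝ := fun k => if h : k < n then t ⟨k, h⟩ else 0 with hT
  set X : ℕ → ℝ := fun k => if h : k < n then x ⟨k, h⟩ else 0 with hX
  set Z : ℕ → ℝ := fun k => if h : k < n then z ⟨k, h⟩ else 0 with hZ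
  have hTk : ∀ (k : ℕ) (h : k < n), T k = t ⟨k, h⟩ := fun k h => dif_pos h
  have hXk : ∀ (k : ℕ) (h : k < n), X k = x ⟨k, h⟩ := fun k h => dif_pos h
  have hZk : ∀ (k : ℕ) (h : k < n), Z k = z ⟨k, h⟩ := fun k h => dif_pos h
  have hxgap' : ∀ k, k + 1 < n → δ ≤ X (k + 1) - X k := by
    intro k h
    rw [hXk (k + 1) h, hXk k (Nat.lt_of_succ_lt h)]
    exact hgap k h
  have hzgap' : ∀ k, k + 1 < n → δ ≤ Z (k + 1) - Z k := by
    intro k h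
    rw [hZk (k + 1) h, hZk k (Nat.lt_of_succ_lt h)]
    have hlt : (⟨k, Nat.lt_of_succ_lt h⟩ : Fin n) < ⟨k + 1, h⟩ := by
      rw [Fin.lt_def]; simp
    have hne : (⟨k + 1, h⟩ : Fin n) ≠ ⟨k, Nat.lt_of_succ_lt h⟩ := by
      intro hcontra
      have := congrArg Fin.val hcontra
      simp at this
    have h1 := hzpair ⟨k + 1, h⟩ ⟨k, Nat.lt_of_succ_lt h⟩ hne
    rw [abs_of_pos (sub_pos.mpr (hzmono hlt))] at h1
    exact h1
  -- build maximal chains in `Fin` form from ℕ data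
  have hmkchain : ∀ i j : ℕ, ∀ (hij : i ≤ j) (hjn : j < n),
      (i = 0 ∨ X i - X (i - 1) > δ) → (j + 1 = n ∨ X (j + 1) - X j > δ) →
      (∀ k, i ≤ k → k < j → X (k + 1) - X k = δ) →
      IsMaximalChain δ x ⟨i, by omega⟩ ⟨j, hjn⟩ := by
    intro i j hij hjn hleft hright hinter
    refine ⟨⟨hij, ?_⟩, ?_, ?_⟩
    · intro k hik hkj
      have h1 := hinter k hik hkj
      rw [hXk (k + 1) (by omega), hXk k (by omega)] at h1
      exact h1
    · rcases hleft with h0 | hgt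
      · exact Or.inl h0
      · refine Or.inr ⟨by omega, ?_⟩
        rw [hXk i (by omega), hXk (i - 1) (by omega)] at hgt
        exact hgt
    · by_cases hn : j + 1 = n
      · exact Or.inl hn
      · rcases hright with h0 | hgt
        · exact Or.inl h0
        · have hj1 : j + 1 < n := by omega
          refine Or.inr ⟨hj1, ?_⟩
          rw [hXk (j + 1) hj1, hXk j (by omega)] at hgt
          exact hgt
  have hE : ∀ i j, i ≤ j → j < n →
      (i = 0 ∨ X i - X (i - 1) > δ) → (j + 1 = n ∨ X (j + 1) - X j > δ) →
      (∀ k, i ≤ k → k < j → X (k + 1) - X k = δ) →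
      ∀ m, i ≤ m → m ≤ j → (∑ k ∈ Icc i m, (if T k < X k then (1 : ℝ) else -1)) ≤ 0 := by
    intro i j hij hjn hleft hright hinter m him hmj
    have hin : i < n := by omega
    have hmn : m < n := by omega
    have hmc := hmkchain i j hij hjn hleft hright hinter
    have hcard := hprefix ⟨i, hin⟩ ⟨j, hjn⟩ hmc ⟨m, hmn⟩ him hmj
    rw [sum_pm]
    have c1 : ((Finset.Icc (⟨i, hin⟩ : Fin n) ⟨m, hmn⟩).filter
        (fun k => t k < x k)).card = ((Icc i m).filter (fun k => T k < X k)).card :=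
      card_fin_nat n _ _ _ _ (fun k hk => by rw [hTk k hk, hXk k hk])
    have c2 : ((Finset.Icc (⟨i, hin⟩ : Fin n) ⟨m, hmn⟩).filter
        (fun k => x k ≤ t k)).card = ((Icc i m).filter (fun k => ¬ T k < X k)).card :=
      card_fin_nat n _ _ _ _ (fun k hk => by rw [hTk k hk, hXk k hk, not_lt])
    rw [← c1, ← c2]
    have : (((Finset.Icc (⟨i, hin⟩ : Fin n) ⟨m, hmn⟩).filter
        (fun k => t k < x k)).card : ℝ)
        ≤ (((Finset.Icc (⟨i, hin⟩ : Fin n) ⟨m, hmn⟩).filter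
        (fun k => x k ≤ t k)).card : ℝ) := by
      exact_mod_cast le_of_lt hcard
    linarith
  have hF : ∀ i j, i ≤ j → j < n →
      (i = 0 ∨ X i - X (i - 1) > δ) → (j + 1 = n ∨ X (j + 1) - X j > δ) →
      (∀ k, i ≤ k → k < j → X (k + 1) - X k = δ) →
      ∀ m, i ≤ m → m ≤ j → (∑ k ∈ Icc m j, (if X k < T k then (1 : ℝ) else -1)) ≤ 0 := by
    intro i j hij hjn hleft hright hinter m him hmj
    have hin : i < n := by omega
    have hmn : m < n := by omega
    have hmc := hmkchain i j hij hjn hleft hright hinter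
    have hcard := hsuffix ⟨i, hin⟩ ⟨j, hjn⟩ hmc ⟨m, hmn⟩ him hmj
    rw [sum_pm]
    have c1 : ((Finset.Icc (⟨m, hmn⟩ : Fin n) ⟨j, hjn⟩).filter
        (fun k => x k < t k)).card = ((Icc m j).filter (fun k => X k < T k)).card :=
      card_fin_nat n _ _ _ _ (fun k hk => by rw [hTk k hk, hXk k hk])
    have c2 : ((Finset.Icc (⟨m, hmn⟩ : Fin n) ⟨j, hjn⟩).filter
        (fun k => t k ≤ x k)).card = ((Icc m j).filter (fun k => ¬ X k < T k)).card :=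
      card_fin_nat n _ _ _ _ (fun k hk => by rw [hTk k hk, hXk k hk, not_lt])
    rw [← c1, ← c2]
    have : (((Finset.Icc (⟨m, hmn⟩ : Fin n) ⟨j, hjn⟩).filter
        (fun k => x k < t k)).card : ℝ)
        ≤ (((Finset.Icc (⟨m, hmn⟩ : Fin n) ⟨j, hjn⟩).filter
        (fun k => t k ≤ x k)).card : ℝ) := by
      exact_mod_cast hcard
    linarith
  have key := global_bound n δ T X Z hxgap' hzgap' hE hF
  have e1 : (∑ k : Fin n, |t k - x k|) = ∑ k ∈ Finset.range n, |T k - X k| := by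
    rw [← Fin.sum_univ_eq_sum_range (fun k => |T k - X k|) n]
    apply Finset.sum_congr rfl
    intro k _
    rw [hTk (k : ℕ) k.isLt, hXk (k : ℕ) k.isLt]
  have e2 : (∑ k : Fin n, |t k - z k|) = ∑ k ∈ Finset.range n, |T k - Z k| := by
    rw [← Fin.sum_univ_eq_sum_range (fun k => |T k - Z k|) n]
    apply Finset.sum_congr rfl
    intro k _
    rw [hTk (k : ℕ) k.isLt, hZk (k : ℕ) k.isLt]
  have e3 : (∑ k ∈ Finset.range n, (|T k - X k| - |T k - Z k|))
      = (∑ k ∈ Finset.range n, |T k - X k|) - ∑ k ∈ Finset.range n, |T k - Z k| :=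
    Finset.sum_sub_distrib _ _
  rw [← Finset.range_eq_Ico] at key
  linarith [hzcost, e1, e2, e3, key]
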